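/- Let w ≥ 1 and r > k ≥ 0 be integers. Then Σ_{i=0}^{r-1} ⌈w/2^{i+1}⌉ ≥ w·(1 - 2^{-(r-k)}) + k. -/

import Mathlib

/-- Splitting the Griesmer sum: for integers `w ≥ 1` and `r > k ≥ 0`,
`∑_{i=0}^{r-1} ⌈w/2^{i+1}⌉ ≥ w·(1 - 2^{-(r-k)}) + k`. -/
theorem stmt_18 (w r k : ℕ) (hw : 1 ≤ w) (hk : k < r) :
    (∑ i ∈ Finset.range r, (⌈(w : ℚ) / 2 ^ (i + 1)⌉ : ℝ)) ≥
      (w : ℝ) * (1 - 2 ^ (-((r : ℝ) - (k : ℝ)))) + (k : ℝ) := by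
  set m := r - k with hm
  have hmk : m + k = r := by omega
  have h1 : ∀ i : ℕ, (1:ℝ) ≤ (⌈(w : ℚ) / 2 ^ (i + 1)⌉ : ℝ) := by
    intro i
    have hp : (0:ℚ) < (w:ℚ)/2^(i+1) := by positivity
    have := Int.ceil_pos.mpr hp
    exact_mod_cast this
  have h2 : ∀ i : ℕ, ((w:ℝ)/2^(i+1)) ≤ (⌈(w : ℚ) / 2 ^ (i + 1)⌉ : ℝ) := by
    intro i
    have h := Int.le_ceil ((w : ℚ) / 2 ^ (i + 1))
    have h' := (Rat.cast_le (K := ℝ)).mpr h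
    push_cast at h' ⊢
    exact h'
  have geo : ∑ i ∈ Finset.range m, (w:ℝ)/2^(i+1) = w * (1 - (1/2:ℝ)^m) := by
    induction m with
    | zero => simp
    | succ n ih =>
      rw [Finset.sum_range_succ, ih]
      simp only [one_div, inv_pow]
      field_simp
      ring
  have hrpow : (2:ℝ) ^ (-((r : ℝ) - (k : ℝ))) = (1/2:ℝ)^m := by
    have : (r:ℝ) - (k:ℝ) = (m:ℕ) := by
      have : (m:ℕ) = r - k := hm
      rw [this]
      push_cast [Nat.cast_sub hk.le]
      ring
    rw [this, Real.rpow_neg (by norm_num), Real.rpow_natCast]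
    simp [one_div, inv_pow]
  rw [hrpow, ← hmk, Finset.sum_range_add]
  have b1 : (w:ℝ) * (1 - (1/2:ℝ)^m) ≤ ∑ i ∈ Finset.range m, (⌈(w : ℚ) / 2 ^ (i + 1)⌉ : ℝ) := by
    rw [← geo]
    exact Finset.sum_le_sum fun i _ => h2 i
  have b2 : (k:ℝ) ≤ ∑ i ∈ Finset.range k, (⌈(w : ℚ) / 2 ^ (m + i + 1)⌉ : ℝ) := by
    calc (k:ℝ) = ∑ _i ∈ Finset.range k, (1:ℝ) := by simp
    _ ≤ _ := Finset.sum_le_sum fun i _ => h1 (m + i)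
  exact add_le_add b1 b2
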